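/- Let α₋₁, α₀, α₁, α₂, σ > 0 and κ, ρ > 1 with κ + 1 = 2ρ, α₂/σ² ≥ 2κ − 3/2 and α₂/σ² > (κ + 1)/(2√2). Define f(x) = α₋₁x⁻¹ − α₀ + α₁x − α₂x^κ and g(x) = σx^ρ for x > 0, so that g'(x)g(x) = ρσ²x^{2ρ−1}. Then for every h₀ > 0 there exist constants q ∈ (2, ∞), ϱ ∈ (1, ∞) and L₁ ∈ [0, ∞) such that for all x, y > 0 and all h ∈ (0, h₀]: 2(x − y)(f(x) − f(y)) + (q − 1)(g(x) − g(y))² + (ϱ/2)·h·(ρσ²x^{2ρ−1} − ρσ²y^{2ρ−1})² − h·(f(x) − f(y))² ≤ L₁ (x − y)². -/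

import Mathlib

open Set

lemma stepA (ρ : ℝ) (hρ : 1 ≤ ρ) {x y : ℝ} (hy : 0 < y) (hxy : y ≤ x) :
    x ^ ρ - y ^ ρ ≤ ρ * x ^ (ρ - 1) * (x - y) := by
  rcases eq_or_lt_of_le hxy with rfl | hlt
  · simp
  · have hx : 0 < x := hy.trans hlt
    obtain ⟨c, hc, hceq⟩ :=
      exists_hasDerivAt_eq_slope (fun t : ℝ => t ^ ρ) (fun t : ℝ => ρ * t ^ (ρ - 1)) hlt
        (fun t ht =>
          (Real.continuousAt_rpow_const t ρ (Or.inl (ne_of_gt (lt_of_lt_of_le hy ht.1)))).continuousWithinAt)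
        (fun t ht => Real.hasDerivAt_rpow_const (Or.inl (ne_of_gt (hy.trans ht.1))))
    have hc0 : 0 < c := hy.trans hc.1
    have hcle : c ^ (ρ - 1) ≤ x ^ (ρ - 1) :=
      Real.rpow_le_rpow hc0.le hc.2.le (by linarith)
    have hne : x - y ≠ 0 := sub_ne_zero.mpr hlt.ne'
    have heq : x ^ ρ - y ^ ρ = ρ * c ^ (ρ - 1) * (x - y) := by
      field_simp at hceq
      linarith [hceq]
    rw [heq]
    have h0 : 0 ≤ x - y := by linarith
    nlinarith [mul_le_mul_of_nonneg_right hcle h0, hρ]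

/-- Key inequality: `(2ρ-1)(x^ρ-y^ρ)² ≤ ρ²(x-y)(x^(2ρ-1)-y^(2ρ-1))`. -/
lemma keyIneq (ρ : ℝ) (hρ : 1 < ρ) {x y : ℝ} (hy : 0 < y) (hxy : y ≤ x) :
    (2 * ρ - 1) * (x ^ ρ - y ^ ρ) ^ 2
      ≤ ρ ^ 2 * ((x - y) * (x ^ (2 * ρ - 1) - y ^ (2 * ρ - 1))) := by
  set F : ℝ → ℝ := fun t =>
    ρ ^ 2 * ((t - y) * (t ^ (2 * ρ - 1) - y ^ (2 * ρ - 1)))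
      - (2 * ρ - 1) * (t ^ ρ - y ^ ρ) ^ 2 with hFdef
  set F1 : ℝ → ℝ := fun t =>
    ρ ^ 2 * ((t ^ (2 * ρ - 1) - y ^ (2 * ρ - 1)) + (t - y) * ((2 * ρ - 1) * t ^ (2 * ρ - 2)))
      - (2 * ρ - 1) * (2 * (t ^ ρ - y ^ ρ) * (ρ * t ^ (ρ - 1))) with hF1def
  have hd1 : ∀ t : ℝ, 0 < t → HasDerivAt F (F1 t) t := by
    intro t ht
    have h1 : HasDerivAt (fun s : ℝ => (s - y) * (s ^ (2 * ρ - 1) - y ^ (2 * ρ - 1)))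
        (1 * (t ^ (2 * ρ - 1) - y ^ (2 * ρ - 1))
          + (t - y) * ((2 * ρ - 1) * t ^ (2 * ρ - 1 - 1))) t :=
      ((hasDerivAt_id t).sub_const y).mul
        ((Real.hasDerivAt_rpow_const (Or.inl ht.ne')).sub_const _)
    have h2 : HasDerivAt (fun s : ℝ => (s ^ ρ - y ^ ρ) ^ 2)
        (2 * (t ^ ρ - y ^ ρ) ^ 1 * (ρ * t ^ (ρ - 1))) t := by
      have := ((Real.hasDerivAt_rpow_const (p := ρ) (Or.inl ht.ne')).sub_const (y ^ ρ)).pow 2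
      simpa [Pi.pow_def] using this
    have h := (h1.const_mul (ρ ^ 2)).sub (h2.const_mul (2 * ρ - 1))
    have e : ρ ^ 2 * (1 * (t ^ (2 * ρ - 1) - y ^ (2 * ρ - 1))
          + (t - y) * ((2 * ρ - 1) * t ^ (2 * ρ - 1 - 1)))
        - (2 * ρ - 1) * (2 * (t ^ ρ - y ^ ρ) ^ 1 * (ρ * t ^ (ρ - 1))) = F1 t := by
      rw [hF1def, show (2 * ρ - 1 - 1 : ℝ) = 2 * ρ - 2 by ring]
      ring
    exact e ▸ h
  set G : ℝ → ℝ := fun t =>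
    2 * (2 * ρ - 1) * (ρ * (ρ - 1))
      * (t ^ (ρ - 2) * (ρ * t ^ (ρ - 1) * (t - y) - (t ^ ρ - y ^ ρ))) with hGdef
  have hd2 : ∀ t : ℝ, 0 < t → HasDerivAt F1 (G t) t := by
    intro t ht
    have ha : HasDerivAt (fun s : ℝ => s ^ (2 * ρ - 1) - y ^ (2 * ρ - 1))
        ((2 * ρ - 1) * t ^ (2 * ρ - 1 - 1)) t :=
      (Real.hasDerivAt_rpow_const (Or.inl ht.ne')).sub_const _
    have hb : HasDerivAt (fun s : ℝ => (s - y) * ((2 * ρ - 1) * s ^ (2 * ρ - 2)))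
        (1 * ((2 * ρ - 1) * t ^ (2 * ρ - 2))
          + (t - y) * ((2 * ρ - 1) * ((2 * ρ - 2) * t ^ (2 * ρ - 2 - 1)))) t :=
      ((hasDerivAt_id t).sub_const y).mul
        ((Real.hasDerivAt_rpow_const (Or.inl ht.ne')).const_mul (2 * ρ - 1))
    have hc : HasDerivAt (fun s : ℝ => 2 * (s ^ ρ - y ^ ρ) * (ρ * s ^ (ρ - 1)))
        ((2 * (ρ * t ^ (ρ - 1))) * (ρ * t ^ (ρ - 1))
          + (2 * (t ^ ρ - y ^ ρ)) * (ρ * ((ρ - 1) * t ^ (ρ - 1 - 1)))) t := by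
      have h1 : HasDerivAt (fun s : ℝ => 2 * (s ^ ρ - y ^ ρ)) (2 * (ρ * t ^ (ρ - 1))) t :=
        ((Real.hasDerivAt_rpow_const (Or.inl ht.ne')).sub_const _).const_mul 2
      have h2 : HasDerivAt (fun s : ℝ => ρ * s ^ (ρ - 1))
          (ρ * ((ρ - 1) * t ^ (ρ - 1 - 1))) t :=
        (Real.hasDerivAt_rpow_const (Or.inl ht.ne')).const_mul ρ
      exact h1.mul h2
    have h := ((ha.add hb).const_mul (ρ ^ 2)).sub (hc.const_mul (2 * ρ - 1))
    have e1 : t ^ (2 * ρ - 1 - 1) = t ^ (ρ - 1) * t ^ (ρ - 1) := by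
      rw [← Real.rpow_add ht]; ring_nf
    have e2 : t ^ (2 * ρ - 2) = t ^ (ρ - 1) * t ^ (ρ - 1) := by
      rw [← Real.rpow_add ht]; ring_nf
    have e3 : t ^ (2 * ρ - 2 - 1) = t ^ (ρ - 2) * t ^ (ρ - 1) := by
      rw [← Real.rpow_add ht]; ring_nf
    have e4 : t ^ (ρ - 1 - 1) = t ^ (ρ - 2) := by ring_nf
    have e6 : t ^ (ρ - 1) = t ^ (ρ - 2) * t := by
      rw [show (ρ - 1 : ℝ) = (ρ - 2) + 1 by ring, Real.rpow_add_one ht.ne']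
    have e : ρ ^ 2 * ((2 * ρ - 1) * t ^ (2 * ρ - 1 - 1)
          + (1 * ((2 * ρ - 1) * t ^ (2 * ρ - 2))
            + (t - y) * ((2 * ρ - 1) * ((2 * ρ - 2) * t ^ (2 * ρ - 2 - 1)))))
        - (2 * ρ - 1) * ((2 * (ρ * t ^ (ρ - 1))) * (ρ * t ^ (ρ - 1))
          + (2 * (t ^ ρ - y ^ ρ)) * (ρ * ((ρ - 1) * t ^ (ρ - 1 - 1)))) = G t := by
      show _ = 2 * (2 * ρ - 1) * (ρ * (ρ - 1))
        * (t ^ (ρ - 2) * (ρ * t ^ (ρ - 1) * (t - y) - (t ^ ρ - y ^ ρ)))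
      rw [e1, e2, e3, e4, e6]
      ring
    exact e ▸ h
  have hGnn : ∀ t : ℝ, y ≤ t → 0 ≤ G t := by
    intro t hyt
    have ht : 0 < t := lt_of_lt_of_le hy hyt
    have hA := stepA ρ hρ.le hy hyt
    have hb : (0:ℝ) ≤ t ^ (ρ - 2) := (Real.rpow_pos_of_pos ht _).le
    have hcoef : (0:ℝ) ≤ 2 * (2 * ρ - 1) * (ρ * (ρ - 1)) := by
      have h1 : (0:ℝ) ≤ (2 * ρ - 1) * ρ * (ρ - 1) :=
        mul_nonneg (mul_nonneg (by linarith) (by linarith)) (by linarith)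
      linarith
    exact mul_nonneg hcoef (mul_nonneg hb (by linarith))
  have hF1y : F1 y = 0 := by simp [hF1def]
  have hm1 : MonotoneOn F1 (Ici y) := by
    apply monotoneOn_of_deriv_nonneg (convex_Ici y)
    · intro t ht
      exact (hd2 t (lt_of_lt_of_le hy ht)).continuousAt.continuousWithinAt
    · intro t ht
      rw [interior_Ici] at ht
      exact ((hd2 t (hy.trans ht)).differentiableAt).differentiableWithinAt
    · intro t ht
      rw [interior_Ici] at ht
      rw [(hd2 t (hy.trans ht)).deriv]
      exact hGnn t ht.le
  have hF1nn : ∀ t : ℝ, y ≤ t → 0 ≤ F1 t := by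
    intro t hyt
    have := hm1 (self_mem_Ici) hyt hyt
    rw [hF1y] at this
    exact this
  have hFy : F y = 0 := by simp [hFdef]
  have hm0 : MonotoneOn F (Ici y) := by
    apply monotoneOn_of_deriv_nonneg (convex_Ici y)
    · intro t ht
      exact (hd1 t (lt_of_lt_of_le hy ht)).continuousAt.continuousWithinAt
    · intro t ht
      rw [interior_Ici] at ht
      exact ((hd1 t (hy.trans ht)).differentiableAt).differentiableWithinAt
    · intro t ht
      rw [interior_Ici] at ht
      rw [(hd1 t (hy.trans ht)).deriv]
      exact hF1nn t ht.le
  have hFx : 0 ≤ F x := by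
    have := hm0 (self_mem_Ici) hxy hxy
    rw [hFy] at this
    exact this
  rw [hFdef] at hFx
  dsimp at hFx
  linarith

/-- Main inequality for the case `y ≤ x`, with abstract parameters. -/
lemma auxIneq (αm1 α₀ α₁ α₂ σ κ ρ q ϱ ε L₁ h₀' : ℝ)
    (hm1 : 0 < αm1) (h₁ : 0 < α₁) (h₂ : 0 < α₂) (hσ : 0 < σ)
    (hκ : 1 < κ) (hρ : 1 < ρ) (hcrit : κ + 1 = 2 * ρ)
    (hq1 : 1 ≤ q - 1)
    (hq : (q - 1) * (σ ^ 2 * ρ ^ 2) ≤ 2 * α₂ * κ)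
    (hε : 0 < ε)
    (hϱ : ϱ / 2 * (ρ ^ 2 * σ ^ 4) ≤ α₂ ^ 2 - ε)
    (hL : 2 * α₁ + h₀' * (α₁ ^ 2 * α₂ ^ 2 / ε) ≤ L₁)
    (x y h : ℝ) (hy : 0 < y) (hxy : y ≤ x) (hh : 0 < h) (hhh : h ≤ h₀') :
    2 * (x - y) * ((αm1 * x⁻¹ - α₀ + α₁ * x - α₂ * x ^ κ)
        - (αm1 * y⁻¹ - α₀ + α₁ * y - α₂ * y ^ κ))
      + (q - 1) * (σ * x ^ ρ - σ * y ^ ρ)^2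
      + (ϱ / 2) * h * (ρ * σ^2 * x ^ (2 * ρ - 1) - ρ * σ^2 * y ^ (2 * ρ - 1))^2
      - h * ((αm1 * x⁻¹ - α₀ + α₁ * x - α₂ * x ^ κ)
        - (αm1 * y⁻¹ - α₀ + α₁ * y - α₂ * y ^ κ))^2
    ≤ L₁ * (x - y)^2 := by
  have hx : 0 < x := lt_of_lt_of_le hy hxy
  have e2 : (2 * ρ - 1 : ℝ) = κ := by linarith
  rw [e2]
  have hD : 0 ≤ x - y := sub_nonneg.mpr hxy
  have hK : 0 ≤ x ^ κ - y ^ κ :=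
    sub_nonneg.mpr (Real.rpow_le_rpow hy.le hxy (by linarith))
  have hI : x⁻¹ - y⁻¹ ≤ 0 := sub_nonpos.mpr (inv_anti₀ hy hxy)
  have hDK : 0 ≤ (x - y) * (x ^ κ - y ^ κ) := mul_nonneg hD hK
  have key' := keyIneq ρ hρ hy hxy
  rw [e2] at key'
  -- f1 : the (q-1)(Δg)² term is dominated by 2α₂ Δx ΔK
  have hκ0 : 0 < κ := by linarith
  have f1 : (q - 1) * (σ * x ^ ρ - σ * y ^ ρ)^2
      ≤ 2 * α₂ * ((x - y) * (x ^ κ - y ^ κ)) := by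
    refine (mul_le_mul_iff_right₀ hκ0).mp ?_
    have hqσ : 0 ≤ (q - 1) * σ ^ 2 := mul_nonneg (by linarith) (sq_nonneg σ)
    have c1 := mul_le_mul_of_nonneg_left key' hqσ
    have c2 := mul_le_mul_of_nonneg_right hq hDK
    linarith [c1, c2]
  -- g2 : inner bound for the h-terms
  have hc : ε * (α₁ ^ 2 * α₂ ^ 2 / ε * (x - y)^2) = α₁ ^ 2 * α₂ ^ 2 * (x - y)^2 := by
    field_simp
  have hb2 : ((αm1 * x⁻¹ - α₀ + α₁ * x - α₂ * x ^ κ)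
        - (αm1 * y⁻¹ - α₀ + α₁ * y - α₂ * y ^ κ))^2
      ≥ α₂ ^ 2 * (x ^ κ - y ^ κ)^2 - 2 * α₁ * α₂ * (x ^ κ - y ^ κ) * (x - y) := by
    have hSK : 0 ≤ α₂ * (x ^ κ - y ^ κ) * (-(αm1 * (x⁻¹ - y⁻¹))) :=
      mul_nonneg (mul_nonneg h₂.le hK)
        (neg_nonneg.mpr (mul_nonpos_of_nonneg_of_nonpos hm1.le hI))
    linarith [sq_nonneg (α₁ * (x - y) + αm1 * (x⁻¹ - y⁻¹)), hSK]
  have hεineq : ε * (ϱ / 2 * (ρ ^ 2 * σ ^ 4)) * (x ^ κ - y ^ κ)^2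
      ≤ ε * (α₂ ^ 2 - ε) * (x ^ κ - y ^ κ)^2 :=
    mul_le_mul_of_nonneg_right (mul_le_mul_of_nonneg_left hϱ hε.le) (sq_nonneg _)
  have hb2ε := mul_le_mul_of_nonneg_left hb2 hε.le
  have g2 : ϱ / 2 * (ρ * σ^2 * x ^ κ - ρ * σ^2 * y ^ κ)^2
      - ((αm1 * x⁻¹ - α₀ + α₁ * x - α₂ * x ^ κ)
        - (αm1 * y⁻¹ - α₀ + α₁ * y - α₂ * y ^ κ))^2
      ≤ (α₁ ^ 2 * α₂ ^ 2 / ε) * (x - y)^2 := by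
    refine le_of_mul_le_mul_left ?_ hε
    linarith [hεineq, hb2ε, hc, sq_nonneg (ε * (x ^ κ - y ^ κ) - α₁ * α₂ * (x - y))]
  have hcnn : 0 ≤ (α₁ ^ 2 * α₂ ^ 2 / ε) * (x - y)^2 := by positivity
  have f2 : h * (ϱ / 2 * (ρ * σ^2 * x ^ κ - ρ * σ^2 * y ^ κ)^2
      - ((αm1 * x⁻¹ - α₀ + α₁ * x - α₂ * x ^ κ)
        - (αm1 * y⁻¹ - α₀ + α₁ * y - α₂ * y ^ κ))^2)
      ≤ h₀' * ((α₁ ^ 2 * α₂ ^ 2 / ε) * (x - y)^2) :=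
    (mul_le_mul_of_nonneg_left g2 hh.le).trans
      (mul_le_mul_of_nonneg_right hhh hcnn)
  have hDI : αm1 * ((x - y) * (x⁻¹ - y⁻¹)) ≤ 0 :=
    mul_nonpos_of_nonneg_of_nonpos hm1.le (mul_nonpos_of_nonneg_of_nonpos hD hI)
  have f5 : (2 * α₁ + h₀' * (α₁ ^ 2 * α₂ ^ 2 / ε)) * (x - y)^2 ≤ L₁ * (x - y)^2 :=
    mul_le_mul_of_nonneg_right hL (sq_nonneg _)
  linarith [f1, f2, hDI, f5]


/-- Full generalized monotonicity condition (θ = 1, η = 0) for the Ait-Sahalia model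
in the critical regime κ + 1 = 2ρ under α₂/σ² ≥ 2κ − 3/2 and α₂/σ² > (κ+1)/(2√2). -/
theorem stmt_18 (αm1 α₀ α₁ α₂ σ κ ρ : ℝ)
    (hm1 : 0 < αm1) (h₀ : 0 < α₀) (h₁ : 0 < α₁) (h₂ : 0 < α₂) (hσ : 0 < σ)
    (hκ : 1 < κ) (hρ : 1 < ρ) (hcrit : κ + 1 = 2 * ρ)
    (hpar1 : α₂ / σ^2 ≥ 2 * κ - 3/2)
    (hpar2 : α₂ / σ^2 > (κ + 1) / (2 * Real.sqrt 2)) :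
    ∀ h₀' : ℝ, 0 < h₀' →
      ∃ q : ℝ, 2 < q ∧ ∃ ϱ : ℝ, 1 < ϱ ∧ ∃ L₁ : ℝ, 0 ≤ L₁ ∧
        ∀ x y h : ℝ, 0 < x → 0 < y → 0 < h → h ≤ h₀' →
          2 * (x - y) * ((αm1 * x⁻¹ - α₀ + α₁ * x - α₂ * x ^ κ)
              - (αm1 * y⁻¹ - α₀ + α₁ * y - α₂ * y ^ κ))
            + (q - 1) * (σ * x ^ ρ - σ * y ^ ρ)^2
            + (ϱ / 2) * h * (ρ * σ^2 * x ^ (2 * ρ - 1) - ρ * σ^2 * y ^ (2 * ρ - 1))^2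
            - h * ((αm1 * x⁻¹ - α₀ + α₁ * x - α₂ * x ^ κ)
              - (αm1 * y⁻¹ - α₀ + α₁ * y - α₂ * y ^ κ))^2
          ≤ L₁ * (x - y)^2 := by
  intro h₀' hh₀'
  have hσ2 : 0 < σ ^ 2 := by positivity
  have hρσ : 0 < σ ^ 2 * ρ ^ 2 := by positivity
  have hα₂' : (2 * κ - 3/2) * σ ^ 2 ≤ α₂ := by
    rw [ge_iff_le, le_div_iff₀ hσ2] at hpar1
    exact hpar1
  -- c₀ := 2α₂κ/(σ²ρ²) > 1
  have hc₀ : σ ^ 2 * ρ ^ 2 < 2 * α₂ * κ := by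
    have hρval : ρ = (κ + 1) / 2 := by linarith
    have h15 : 0 < σ ^ 2 * ((κ - 1) * (15 * κ + 1)) :=
      mul_pos hσ2 (mul_pos (by linarith) (by linarith))
    have hA := mul_le_mul_of_nonneg_left hα₂' (by linarith : (0:ℝ) ≤ 2 * κ)
    rw [hρval]
    nlinarith [h15, hA]
  set c₀ : ℝ := 2 * α₂ * κ / (σ ^ 2 * ρ ^ 2) with hc₀def
  have hc₀1 : 1 < c₀ := (one_lt_div hρσ).mpr hc₀
  refine ⟨1 + (1 + c₀) / 2, by linarith, ?_⟩
  -- ρ²σ⁴ < 2α₂²  from hpar2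
  have hsq2 : (0:ℝ) < Real.sqrt 2 := Real.sqrt_pos.mpr (by norm_num)
  have hs2 : Real.sqrt 2 ^ 2 = 2 := Real.sq_sqrt (by norm_num)
  have hcross : (κ + 1) * σ ^ 2 < α₂ * (2 * Real.sqrt 2) :=
    (div_lt_div_iff₀ (by positivity) hσ2).mp hpar2
  have hρσ4 : ρ ^ 2 * σ ^ 4 < 2 * α₂ ^ 2 := by
    have h1 : ρ * σ ^ 2 < α₂ * Real.sqrt 2 := by nlinarith [hcross]
    have h2 : 0 < ρ * σ ^ 2 := by positivity
    nlinarith [mul_self_lt_mul_self h2.le h1, hs2]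
  set ε : ℝ := (α₂ ^ 2 - ρ ^ 2 * σ ^ 4 / 2) / 2 with hεdef
  have hε : 0 < ε := by rw [hεdef]; linarith
  have hρσ4pos : (0:ℝ) < ρ ^ 2 * σ ^ 4 := by positivity
  refine ⟨(α₂ ^ 2 + ρ ^ 2 * σ ^ 4 / 2) / (ρ ^ 2 * σ ^ 4), ?_, ?_⟩
  · rw [lt_div_iff₀ hρσ4pos]; linarith
  refine ⟨2 * α₁ + h₀' * (α₁ ^ 2 * α₂ ^ 2 / ε), by positivity, ?_⟩
  intro x y h hx hy hh hhh
  have hq1 : (1:ℝ) ≤ 1 + (1 + c₀) / 2 - 1 := by linarith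
  have hq : (1 + (1 + c₀) / 2 - 1) * (σ ^ 2 * ρ ^ 2) ≤ 2 * α₂ * κ := by
    have : c₀ * (σ ^ 2 * ρ ^ 2) = 2 * α₂ * κ := by
      rw [hc₀def]; field_simp
    nlinarith [hc₀1, hρσ]
  have hϱ : (α₂ ^ 2 + ρ ^ 2 * σ ^ 4 / 2) / (ρ ^ 2 * σ ^ 4) / 2 * (ρ ^ 2 * σ ^ 4)
      ≤ α₂ ^ 2 - ε := by
    have e1 : (α₂ ^ 2 + ρ ^ 2 * σ ^ 4 / 2) / (ρ ^ 2 * σ ^ 4) / 2 * (ρ ^ 2 * σ ^ 4)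
        = (α₂ ^ 2 + ρ ^ 2 * σ ^ 4 / 2) / 2 := by
      field_simp
    have e2 : α₂ ^ 2 - ε = (α₂ ^ 2 + ρ ^ 2 * σ ^ 4 / 2) / 2 := by
      rw [hεdef]; ring
    rw [e1, e2]
  rcases le_total y x with hxy | hxy
  · exact auxIneq αm1 α₀ α₁ α₂ σ κ ρ _ _ ε _ h₀' hm1 h₁ h₂ hσ hκ hρ hcrit
      hq1 hq hε hϱ le_rfl x y h hy hxy hh hhh
  · have H := auxIneq αm1 α₀ α₁ α₂ σ κ ρ _ _ ε _ h₀' hm1 h₁ h₂ hσ hκ hρ hcrit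
      hq1 hq hε hϱ le_rfl y x h hx hxy hh hhh
    linarith [H]
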